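/- arXiv:2302.03123 — 6 statements merged into one kernel-verified Lean document; each statement's English description precedes it below -/
import Mathlib

section
/- Let Q be a divisible commutative quantale, b ∈ Q, and define the smooth slice multiplication x ⊗_b y := b ⊗ (b ⧵ x) ⊗ (b ⧵ y) for x, y ≤ b. Then for all x, y, z ≤ b one has x ⊗_b (y ⊗_b z) = b ⊗ (b ⧵ x) ⊗ (b ⧵ y) ⊗ (b ⧵ z) = (x ⊗_b y) ⊗_b z, and x ⊗_b y = y ⊗_b x; i.e. ⊗_b is associative and commutative on the interval [⊥, b]. -/
/-- Residuation in a quantale: `a ⧵ b = sSup {c | a * c ≤ b}`. -/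
def res {Q : Type*} [Mul Q] [CompleteLattice Q] (a b : Q) : Q := sSup {c | a * c ≤ b}

/-- The smooth slice multiplication on `[⊥, b]`: `x ⊗_b y = b * (b ⧵ x) * (b ⧵ y)`. -/
def smul {Q : Type*} [Mul Q] [CompleteLattice Q] (b x y : Q) : Q := b * res b x * res b y

lemma mul_res_of_le {Q : Type*} [CommSemigroup Q] [CompleteLattice Q] [IsQuantale Q]
    (hdiv : ∀ a b : Q, a ≤ b → ∃ c, a = b * c)
    {a b : Q} (h : a ≤ b) : b * res b a = a := by
  apply le_antisymm
  · rw [res, mul_sSup_distrib]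
    exact iSup_le fun c => iSup_le fun hc => hc
  · obtain ⟨c, hc⟩ := hdiv a b h
    calc a = b * c := hc
    _ ≤ b * res b a := mul_le_mul_right (le_sSup (by simp [hc.symm])) b

/-- In a divisible commutative quantale, the smooth slice multiplication `⊗_b` is
associative and commutative on `[⊥, b]`. -/
theorem smooth_slice_assoc_comm {Q : Type*} [CommSemigroup Q] [CompleteLattice Q] [IsQuantale Q]
    (hdiv : ∀ a b : Q, a ≤ b → ∃ c, a = b * c)
    {b x y z : Q} (hx : x ≤ b) (hy : y ≤ b) (hz : z ≤ b) :
    smul b x (smul b y z) = b * res b x * res b y * res b z ∧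
    smul b x (smul b y z) = smul b (smul b x y) z ∧
    smul b x y = smul b y x := by
  have key : ∀ u v : Q, u ≤ b → v ≤ b →
      b * (res b (smul b u v)) = b * res b u * res b v := by
    intro u v hu hv
    have h1 : smul b u v ≤ b := by
      calc smul b u v = (b * res b u) * res b v := rfl
      _ = u * res b v := by rw [mul_res_of_le hdiv hu]
      _ ≤ b * res b v := mul_le_mul_left hu _
      _ = v := mul_res_of_le hdiv hv
      _ ≤ b := hv
    rw [mul_res_of_le hdiv h1]; rfl
  have hA : smul b x (smul b y z) = b * res b x * res b y * res b z := by
    calc smul b x (smul b y z) = res b x * (b * res b (smul b y z)) := by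
          rw [smul]; ac_rfl
    _ = res b x * (b * res b y * res b z) := by rw [key y z hy hz]
    _ = b * res b x * res b y * res b z := by ac_rfl
  refine ⟨hA, ?_, ?_⟩
  · rw [hA]
    calc b * res b x * res b y * res b z
        = res b z * (b * res b (smul b x y)) := by rw [key x y hx hy]; ac_rfl
    _ = smul b (smul b x y) z := by simp only [smul]; ac_rfl
  · rw [smul, smul]; ac_rfl
end

section
/- Let Q be a divisible commutative quantale and b ∈ Q. Then b is a unit for the smooth slice multiplication: for every x ≤ b, b ⊗_b x = x, i.e. b ⊗ (b ⧵ b) ⊗ (b ⧵ x) = x. -/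
lemma mul_res_eq {Q : Type*} [CommSemigroup Q] [CompleteLattice Q] [IsQuantale Q]
    (hdiv : ∀ a b : Q, a ≤ b → ∃ c, a = b * c)
    {b x : Q} (hx : x ≤ b) : b * res b x = x := by
  apply le_antisymm
  · rw [res, mul_sSup_distrib]
    exact iSup₂_le fun c hc => hc
  · obtain ⟨c, hc⟩ := hdiv x b hx
    calc x = b * c := hc
    _ ≤ b * res b x := by
        exact mul_le_mul_right (le_sSup (by simp [Set.mem_setOf_eq, ← hc])) b

/-- In a divisible commutative quantale, `b` is a unit for the smooth slice
multiplication `⊗_b` on `[⊥, b]`. -/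
theorem smooth_slice_unit {Q : Type*} [CommSemigroup Q] [CompleteLattice Q] [IsQuantale Q]
    (hdiv : ∀ a b : Q, a ≤ b → ∃ c, a = b * c)
    {b x : Q} (hx : x ≤ b) :
    smul b b x = x := by
  have h1 : b * res b b = b := mul_res_eq hdiv le_rfl
  have h2 : b * res b x = x := mul_res_eq hdiv hx
  rw [smul, h1, h2]
end

section
/- Let Q be a commutative semicartesian quantale and let e, e', e'' be idempotent elements of Q. Then δ(e, e') := e ⊗ e' defines a Q-set structure on the set of idempotents: (i) e ⊗ e' = e' ⊗ e; (ii) (e ⊗ e') ⊗ (e' ⊗ e'') ≤ e ⊗ e''; (iii) (e ⊗ e) ⊗ (e ⊗ e') = e ⊗ e'. Moreover, e ⊗ e' is idempotent, e ⊗ e' ≤ e, e ⊗ e' ≤ e', and every idempotent f with f ≤ e and f ≤ e' satisfies f ≤ e ⊗ e'; that is, e ⊗ e' is the infimum of {e, e'} in the poset of idempotents of Q. -/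
/-- In a commutative semicartesian quantale, `δ(e, e') = e * e'` is a Q-set structure
on idempotents, and `e * e'` is the infimum of `{e, e'}` in the poset of idempotents. -/
theorem idempotents_qset {Q : Type*} [CommSemigroup Q] [CompleteLattice Q] [IsQuantale Q]
    (hsc : ∀ a b : Q, a * b ≤ a ⊓ b)
    {e e' e'' : Q} (he : e * e = e) (he' : e' * e' = e') (he'' : e'' * e'' = e'') :
    e * e' = e' * e ∧
    (e * e') * (e' * e'') ≤ e * e'' ∧
    (e * e) * (e * e') = e * e' ∧
    (e * e') * (e * e') = e * e' ∧
    e * e' ≤ e ∧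
    e * e' ≤ e' ∧
    (∀ f : Q, f * f = f → f ≤ e → f ≤ e' → f ≤ e * e') := by
  have hmono : ∀ a b c d : Q, a ≤ b → c ≤ d → a * c ≤ b * d := fun a b c d h1 h2 =>
    mul_le_mul' h1 h2
  refine ⟨mul_comm e e', ?_, by rw [he, ← mul_assoc, he], ?_, ?_, ?_, ?_⟩
  · calc (e * e') * (e' * e'') = e * ((e' * e') * e'') := by
          rw [mul_assoc, ← mul_assoc e' e' e'']
    _ = e * (e' * e'') := by rw [he']
    _ ≤ e * e'' := hmono _ _ _ _ le_rfl (le_trans (hsc e' e'') inf_le_right)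
  · calc (e * e') * (e * e') = (e * e) * (e' * e') := by
          rw [mul_assoc, mul_assoc, mul_comm e' (e * e')]
          rw [mul_assoc]
    _ = e * e' := by rw [he, he']
  · exact le_trans (hsc e e') inf_le_left
  · exact le_trans (hsc e e') inf_le_right
  · intro f hf h1 h2
    calc f = f * f := hf.symm
    _ ≤ e * e' := hmono _ _ _ _ h1 h2
end

section
/- Let Q be an integral commutative quantale and let E(Q) denote its set of idempotent elements. On the set Q × E(Q) define δ((x, e), (y, a)) := a ⊗ e ⊗ ((x ⧵ y) ⊓ (y ⧵ x)). Then δ is a Q-set structure on Q × E(Q): it is symmetric; δ(p, q) ⊗ δ(q, r) ≤ δ(p, r) for all p, q, r ∈ Q × E(Q); and δ(p, p) ⊗ δ(p, q) = δ(p, q), with δ((x, e), (x, e)) = e. -/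
section aux
variable {Q : Type*} [CommSemigroup Q] [CompleteLattice Q] [IsQuantale Q]

lemma res_le_iff {a b c : Q} : c ≤ res a b ↔ a * c ≤ b :=
  Quantale.rightMulResiduation_le_iff_mul_le

lemma mul_res_le (a b : Q) : a * res a b ≤ b := res_le_iff.mp le_rfl

lemma res_self_top (hint : ∀ a : Q, ⊤ * a = a) (x : Q) : res x x = ⊤ :=
  top_le_iff.mp (res_le_iff.mpr (by rw [mul_comm, hint]))

lemma res_trans (x y z : Q) : res x y * res y z ≤ res x z := by
  rw [res_le_iff, ← mul_assoc]
  exact le_trans (mul_le_mul_left (mul_res_le x y) _) (mul_res_le y z)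

lemma le_of_mul_left (hint : ∀ a : Q, ⊤ * a = a) (a b : Q) : a * b ≤ b :=
  (mul_le_mul_left le_top b).trans (hint b).le

end aux

/-- In an integral commutative quantale, `δ((x,e),(y,a)) = a * e * ((x ⧵ y) ⊓ (y ⧵ x))`
is a Q-set structure on `Q × E(Q)`. -/
theorem qE_qset {Q : Type*} [CommSemigroup Q] [CompleteLattice Q] [IsQuantale Q]
    (hint : ∀ a : Q, ⊤ * a = a)
    {x y z e a c : Q} (he : e * e = e) (ha : a * a = a) (hc : c * c = c) :
    a * e * (res x y ⊓ res y x) = e * a * (res y x ⊓ res x y) ∧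
    (a * e * (res x y ⊓ res y x)) * (c * a * (res y z ⊓ res z y)) ≤
      c * e * (res x z ⊓ res z x) ∧
    (e * e * (res x x ⊓ res x x)) * (a * e * (res x y ⊓ res y x)) =
      a * e * (res x y ⊓ res y x) ∧
    e * e * (res x x ⊓ res x x) = e := by
  have htop : e * e * (res x x ⊓ res x x) = e := by
    rw [res_self_top hint, inf_idem, he, mul_comm, hint]
  refine ⟨by rw [mul_comm a e, inf_comm], ?_, by rw [htop, mul_assoc, mul_left_comm, ← mul_assoc e e, he, ← mul_assoc], htop⟩
  have key : (res x y ⊓ res y x) * (res y z ⊓ res z y) ≤ res x z ⊓ res z x := by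
    refine le_inf ?_ ?_
    · exact le_trans (mul_le_mul' inf_le_left inf_le_left) (res_trans x y z)
    · exact le_trans (mul_le_mul' inf_le_right inf_le_right)
        (by rw [mul_comm]; exact res_trans z y x)
  calc (a * e * (res x y ⊓ res y x)) * (c * a * (res y z ⊓ res z y))
      = a * (a * (c * e * ((res x y ⊓ res y x) * (res y z ⊓ res z y)))) := by
        ac_rfl
    _ ≤ c * e * ((res x y ⊓ res y x) * (res y z ⊓ res z y)) :=
        le_trans (le_of_mul_left hint _ _) (le_of_mul_left hint _ _)
    _ ≤ c * e * (res x z ⊓ res z x) := mul_le_mul_right key _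
end

section
/- Let Q be a commutative semicartesian quantale with idempotent upper approximations: there is a map q ↦ q⁺ such that for every q, q⁺ is idempotent, q = q ⊗ q⁺, and q⁺ ≤ e for every idempotent e with q = q ⊗ e. Define δ : Q × Q → Q by δ(x, y) = x ⊗ y if x ≠ y and δ(x, x) = x⁺. Then δ is a Q-set structure on Q: δ(x,y) = δ(y,x); δ(x,y) ⊗ δ(y,z) ≤ δ(x,z); and δ(x,x) ⊗ δ(x,y) = δ(x,y). -/
open Classical in
/-- In a commutative semicartesian quantale with idempotent upper approximations
`q ↦ q⁺`, the map `δ(x, y) = x * y` for `x ≠ y`, `δ(x, x) = x⁺` is a Q-set structure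
on `Q` itself. -/
theorem upper_approx_qset {Q : Type*} [CommSemigroup Q] [CompleteLattice Q] [IsQuantale Q]
    (hsc : ∀ a b : Q, a * b ≤ a ⊓ b)
    (plus : Q → Q)
    (hidem : ∀ q : Q, plus q * plus q = plus q)
    (happrox : ∀ q : Q, q = q * plus q)
    (hleast : ∀ q e : Q, e * e = e → q = q * e → plus q ≤ e)
    (δ : Q → Q → Q)
    (hδ : ∀ x y : Q, δ x y = if x = y then plus x else x * y) :
    (∀ x y : Q, δ x y = δ y x) ∧
    (∀ x y z : Q, δ x y * δ y z ≤ δ x z) ∧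
    (∀ x y : Q, δ x x * δ x y = δ x y) := by
  have hmulle : ∀ a b : Q, a * b ≤ a := fun a b => (hsc a b).trans inf_le_left
  have hmulle' : ∀ a b : Q, a * b ≤ b := fun a b => (hsc a b).trans inf_le_right
  have hxplus : ∀ x : Q, x ≤ plus x := fun x => (happrox x).le.trans (hmulle' x (plus x))
  refine ⟨fun x y => ?_, fun x y z => ?_, fun x y => ?_⟩
  · rw [hδ, hδ]
    by_cases h : x = y
    · subst h; simp
    · rw [if_neg h, if_neg (Ne.symm h), mul_comm]
  · rw [hδ, hδ, hδ]
    by_cases hxy : x = y <;> by_cases hyz : y = z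
    · subst hxy; subst hyz; simp [hidem]
    · subst hxy
      rw [if_pos rfl, if_neg hyz, ← mul_assoc, mul_comm (plus x) x, ← happrox x]
    · subst hyz
      rw [if_neg hxy, if_pos rfl, mul_assoc, ← happrox y]
    · rw [if_neg hxy, if_neg hyz]
      by_cases hxz : x = z
      · rw [if_pos hxz]
        exact (hmulle _ _).trans ((hmulle _ _).trans (hxplus x))
      · rw [if_neg hxz]
        exact mul_le_mul' (hmulle x y) (hmulle' y z)
  · rw [hδ, hδ, if_pos rfl]
    by_cases h : x = y
    · subst h; rw [if_pos rfl, hidem]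
    · rw [if_neg h, ← mul_assoc, mul_comm (plus x) x, ← happrox x]
end

section
/- Let Q be an integral commutative quantale and let (X, δ) be a Q-set, writing Ex := δ(x, x). Then the map (x, y) ↦ (δ(x, y), Ex ⊗ Ey) is a functional morphism from the Q-set X ⊠ X (underlying set X × X with distance δ_{X⊠X}((x,y),(x',y')) := δ(x,x') ⊗ δ(y,y')) to the Q-set Q_E (underlying set Q × E(Q) with distance δ_{Q_E}((p,e),(q,a)) := a ⊗ e ⊗ ((p ⧵ q) ⊓ (q ⧵ p))). Concretely: (i) for all x, y, x', y' ∈ X, δ(x,x') ⊗ δ(y,y') ≤ (Ex ⊗ Ey) ⊗ (Ex' ⊗ Ey') ⊗ ((δ(x,y) ⧵ δ(x',y')) ⊓ (δ(x',y') ⧵ δ(x,y))); and (ii) Ex ⊗ Ey = δ_{Q_E}((δ(x,y), Ex ⊗ Ey), (δ(x,y), Ex ⊗ Ey)). -/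
theorem le_res' {Q : Type*} [Mul Q] [CompleteLattice Q] {a b c : Q}
    (h : a * c ≤ b) : c ≤ res a b := le_sSup h

/-- For an integral commutative quantale `Q` and a Q-set `(X, δ)` with extent
`Ex = δ(x, x)`, the map `(x, y) ↦ (δ(x, y), Ex * Ey)` is a functional morphism
from `X ⊠ X` to `Q_E`. -/
theorem delta_functional_morphism {Q : Type*} [CommSemigroup Q] [CompleteLattice Q]
    [IsQuantale Q]
    (hint : ∀ a : Q, ⊤ * a = a)
    {X : Type*} (δ : X → X → Q)
    (hsym : ∀ x y : X, δ x y = δ y x)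
    (htri : ∀ x y z : X, δ x y * δ y z ≤ δ x z)
    (hext : ∀ x y : X, δ x x * δ x y = δ x y) :
    (∀ x y x' y' : X,
      δ x x' * δ y y' ≤
        (δ x x * δ y y) * (δ x' x' * δ y' y') *
          (res (δ x y) (δ x' y') ⊓ res (δ x' y') (δ x y))) ∧
    (∀ x y : X,
      δ x x * δ y y =
        (δ x x * δ y y) * (δ x x * δ y y) *
          (res (δ x y) (δ x y) ⊓ res (δ x y) (δ x y))) := by
  have hres : ∀ x y x' y' : X, δ x x' * δ y y' ≤ res (δ x y) (δ x' y') := by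
    intro x y x' y'
    apply le_res'
    calc δ x y * (δ x x' * δ y y') = (δ x y * δ x x') * δ y y' := (mul_assoc _ _ _).symm
      _ = (δ x' x * δ x y) * δ y y' := by rw [mul_comm (δ x y), hsym x x']
      _ ≤ δ x' y * δ y y' := mul_le_mul_left (htri _ _ _) _
      _ ≤ δ x' y' := htri _ _ _
  constructor
  · intro x y x' y'
    have h1 : δ x x' * δ y y' =
        (δ x x * δ y y) * (δ x' x' * δ y' y') * (δ x x' * δ y y') := by
      have e1 : δ x x * δ x x' = δ x x' := hext x x'
      have e2 : δ x' x' * δ x x' = δ x x' := by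
        rw [hsym x x', hext x' x]
      have e3 : δ y y * δ y y' = δ y y' := hext y y'
      have e4 : δ y' y' * δ y y' = δ y y' := by
        rw [hsym y y', hext y' y]
      calc δ x x' * δ y y'
          = (δ x x * (δ x' x' * δ x x')) * (δ y y * (δ y' y' * δ y y')) := by
            rw [e2, e1, e4, e3]
        _ = (δ x x * δ y y) * (δ x' x' * δ y' y') * (δ x x' * δ y y') := by
            ac_rfl
    calc δ x x' * δ y y'
        = (δ x x * δ y y) * (δ x' x' * δ y' y') * (δ x x' * δ y y') := h1
      _ ≤ (δ x x * δ y y) * (δ x' x' * δ y' y') *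
          (res (δ x y) (δ x' y') ⊓ res (δ x' y') (δ x y)) := by
          apply mul_le_mul_right
          exact le_inf (hres x y x' y') (by
            have := hres x' y' x y
            rwa [hsym x' x, hsym y' y] at this)
  · intro x y
    have hrtop : res (δ x y) (δ x y) = ⊤ := by
      apply top_unique
      apply le_res'
      rw [mul_comm, hint]
    rw [hrtop, inf_idem, mul_comm _ (⊤ : Q), hint]
    have hx : δ x x * δ x x = δ x x := hext x x
    have hy : δ y y * δ y y = δ y y := hext y y
    rw [mul_mul_mul_comm, hx, hy]
end
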